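/- arXiv:0809.4019 — 2 statements merged into one kernel-verified Lean document; each statement's English description precedes it below -/
import Mathlib

section
/- Let X₁, …, X_N be independent nonnegative real-valued random variables with E[X_i²] < ∞, and let S = X₁ + ⋯ + X_N. Then for every x > 0, Pr[S ≤ E[S] − N·x] ≤ exp(−N²·x²/(2·∑_{i=1}^N E[X_i²])). -/
open MeasureTheory ProbabilityTheory

private lemma exp_neg_le_quad {y : ℝ} (hy : 0 ≤ y) :
    Real.exp (-y) ≤ 1 - y + y ^ 2 / 2 := by
  have h1 : 1 + y + y ^ 2 / 2 ≤ Real.exp y := Real.quadratic_le_exp_of_nonneg hy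
  have h2 : Real.exp (-y) * Real.exp y = 1 := by
    rw [← Real.exp_add]; simp
  nlinarith [Real.exp_pos y, Real.exp_pos (-y), sq_nonneg (y - 1), sq_nonneg (y * y),
    sq_nonneg y]

theorem maurer_inequality {Ω : Type*} [MeasurableSpace Ω] (μpr : Measure Ω)
    [IsProbabilityMeasure μpr] (N : ℕ) (hN : 1 ≤ N) (X : Fin N → Ω → ℝ)
    (hmeas : ∀ i, Measurable (X i))
    (hindep : iIndepFun X μpr)
    (hnonneg : ∀ i ω, 0 ≤ X i ω)
    (hint2 : ∀ i, Integrable (fun ω => (X i ω) ^ 2) μpr)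
    (S : Ω → ℝ) (hS : ∀ ω, S ω = ∑ i, X i ω) (x : ℝ) (hx : 0 < x) :
    (μpr {ω | S ω ≤ (∫ ω, S ω ∂μpr) - N * x}).toReal ≤
      Real.exp (-(N : ℝ) ^ 2 * x ^ 2 / (2 * ∑ i, ∫ ω, (X i ω) ^ 2 ∂μpr)) := by
  classical
  set sqSum : ℝ := ∑ i, ∫ ω, (X i ω) ^ 2 ∂μpr with hsqSum
  have hsqSumnonneg : 0 ≤ sqSum := by
    apply Finset.sum_nonneg
    intro i _
    exact integral_nonneg fun ω => sq_nonneg _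
  -- integrability of X i
  have hintX : ∀ i, Integrable (X i) μpr := by
    intro i
    have : MemLp (X i) 2 μpr := by
      rw [memLp_two_iff_integrable_sq (hmeas i).aestronglyMeasurable]
      simpa [sq] using hint2 i
    exact this.integrable one_le_two
  rcases eq_or_lt_of_le hsqSumnonneg with hsq0 | hsqpos
  · -- degenerate case: sqSum = 0, RHS = exp(_/0) = exp 0 = 1
    rw [← hsq0]
    simp only [mul_zero, div_zero, Real.exp_zero]
    calc (μpr {ω | S ω ≤ (∫ ω, S ω ∂μpr) - N * x}).toReal
        ≤ (μpr Set.univ).toReal := by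
          apply ENNReal.toReal_mono (measure_ne_top _ _)
          exact measure_mono (Set.subset_univ _)
      _ = 1 := by simp
  -- main case
  set t : ℝ := N * x / sqSum with htdef
  have hNpos : (0 : ℝ) < N := by exact_mod_cast hN
  have ht : 0 < t := div_pos (mul_pos hNpos hx) hsqpos
  have hSmeas : Measurable S := by
    have : S = fun ω => ∑ i, X i ω := funext hS
    rw [this]
    exact Finset.measurable_sum _ fun i _ => hmeas i
  have hSnonneg : ∀ ω, 0 ≤ S ω := fun ω => (hS ω) ▸
    Finset.sum_nonneg fun i _ => hnonneg i ω
  -- integrability of exp(-t * S)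
  have hexp_int : Integrable (fun ω => Real.exp (-t * S ω)) μpr := by
    apply Integrable.mono' (integrable_const (1 : ℝ))
      ((hSmeas.const_mul (-t)).exp.aestronglyMeasurable)
    filter_upwards with ω
    rw [Real.norm_eq_abs, Real.abs_exp]
    apply Real.exp_le_one_iff.mpr
    have := hSnonneg ω
    nlinarith
  have key := measure_le_le_exp_mul_mgf (μ := μpr) (X := S)
    ((∫ ω, S ω ∂μpr) - N * x) (neg_nonpos_of_nonneg ht.le) hexp_int
  -- mgf of sum
  have hSsum : S = ∑ i, X i := by
    funext ω; rw [hS]; simp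
  have hmgf_sum : mgf S μpr (-t) = ∏ i, mgf (X i) μpr (-t) := by
    rw [hSsum]
    exact hindep.mgf_sum hmeas Finset.univ
  -- bound each mgf factor
  have hfac : ∀ i : Fin N, mgf (X i) μpr (-t) ≤
      Real.exp (-t * (∫ ω, X i ω ∂μpr) + t ^ 2 * (∫ ω, (X i ω) ^ 2 ∂μpr) / 2) := by
    intro i
    have hexpX_int : Integrable (fun ω => Real.exp (-t * X i ω)) μpr := by
      apply Integrable.mono' (integrable_const (1 : ℝ))
        (((hmeas i).const_mul (-t)).exp.aestronglyMeasurable)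
      filter_upwards with ω
      rw [Real.norm_eq_abs, Real.abs_exp]
      apply Real.exp_le_one_iff.mpr
      have := hnonneg i ω
      nlinarith
    have hptwise : ∀ ω, Real.exp (-t * X i ω) ≤
        1 - t * X i ω + t ^ 2 * (X i ω) ^ 2 / 2 := by
      intro ω
      have hy : 0 ≤ t * X i ω := mul_nonneg ht.le (hnonneg i ω)
      have := exp_neg_le_quad hy
      calc Real.exp (-t * X i ω) = Real.exp (-(t * X i ω)) := by ring_nf
        _ ≤ 1 - t * X i ω + (t * X i ω) ^ 2 / 2 := this
        _ = 1 - t * X i ω + t ^ 2 * (X i ω) ^ 2 / 2 := by ring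
    have hA : Integrable (fun ω => 1 - t * X i ω) μpr :=
      (integrable_const 1).sub ((hintX i).const_mul t)
    have hB : Integrable (fun ω => t ^ 2 * (X i ω) ^ 2 / 2) μpr :=
      ((hint2 i).const_mul (t ^ 2)).div_const 2
    have hint_rhs : Integrable (fun ω => 1 - t * X i ω + t ^ 2 * (X i ω) ^ 2 / 2) μpr :=
      hA.add hB
    calc mgf (X i) μpr (-t) = ∫ ω, Real.exp (-t * X i ω) ∂μpr := rfl
      _ ≤ ∫ ω, (1 - t * X i ω + t ^ 2 * (X i ω) ^ 2 / 2) ∂μpr :=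
          integral_mono hexpX_int hint_rhs hptwise
      _ = 1 - t * (∫ ω, X i ω ∂μpr) + t ^ 2 * (∫ ω, (X i ω) ^ 2 ∂μpr) / 2 := by
          rw [integral_add hA hB,
            integral_sub (integrable_const 1) ((hintX i).const_mul t)]
          simp [MeasureTheory.integral_const_mul, MeasureTheory.integral_div]
      _ ≤ Real.exp (-t * (∫ ω, X i ω ∂μpr) + t ^ 2 * (∫ ω, (X i ω) ^ 2 ∂μpr) / 2) := by
          have := Real.add_one_le_exp (-t * (∫ ω, X i ω ∂μpr) +
            t ^ 2 * (∫ ω, (X i ω) ^ 2 ∂μpr) / 2)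
          linarith
  -- mgf nonneg
  have hmgf_nonneg : ∀ i : Fin N, 0 ≤ mgf (X i) μpr (-t) := fun i => mgf_nonneg
  have hprod_le : ∏ i, mgf (X i) μpr (-t) ≤
      Real.exp (∑ i, (-t * (∫ ω, X i ω ∂μpr) + t ^ 2 * (∫ ω, (X i ω) ^ 2 ∂μpr) / 2)) := by
    rw [Real.exp_sum]
    exact Finset.prod_le_prod (fun i _ => hmgf_nonneg i) (fun i _ => hfac i)
  have hES : (∫ ω, S ω ∂μpr) = ∑ i, ∫ ω, X i ω ∂μpr := by
    simp only [hS]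
    rw [integral_finset_sum _ fun i _ => hintX i]
  have hsum_eq : ∑ i, (-t * (∫ ω, X i ω ∂μpr) + t ^ 2 * (∫ ω, (X i ω) ^ 2 ∂μpr) / 2)
      = -t * (∫ ω, S ω ∂μpr) + t ^ 2 * sqSum / 2 := by
    rw [Finset.sum_add_distrib, ← Finset.mul_sum, ← hES, hsqSum]
    rw [← Finset.sum_div, ← Finset.mul_sum]
  calc (μpr {ω | S ω ≤ (∫ ω, S ω ∂μpr) - N * x}).toReal
      ≤ Real.exp (-(-t) * ((∫ ω, S ω ∂μpr) - N * x)) * mgf S μpr (-t) := key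
    _ ≤ Real.exp (t * ((∫ ω, S ω ∂μpr) - N * x)) *
        Real.exp (-t * (∫ ω, S ω ∂μpr) + t ^ 2 * sqSum / 2) := by
        rw [neg_neg]
        apply mul_le_mul_of_nonneg_left _ (Real.exp_pos _).le
        rw [hmgf_sum]
        exact hprod_le.trans_eq (by rw [hsum_eq])
    _ = Real.exp (-t * (N * x) + t ^ 2 * sqSum / 2) := by
        rw [← Real.exp_add]; ring_nf
    _ = Real.exp (-(N : ℝ) ^ 2 * x ^ 2 / (2 * sqSum)) := by
        congr 1
        rw [htdef]
        field_simp
        ring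
end

section
/- Let X₁, …, X_n be i.i.d. nonnegative random variables with common cdf F satisfying 1 − F(x) ~ c₀·x^{−ν}/Γ(1−ν) as x → ∞, where 0 < ν < 1 and c₀ > 0. Let I_n = X₁ + ⋯ + X_n and M_n = max{X₁,…,X_n}. If E[M_n/I_n] → 1 − ν and the limiting distribution of I_n/M_n is non-degenerate, then liminf_{n→∞} Pr[M_n/I_n ≥ 1 − ν] > 0. -/
open MeasureTheory ProbabilityTheory Filter Real

section AuxLemmas

open Set

/-- Truncated first moment bound from a polynomial tail bound. -/
lemma trunc_mean_bound {Ω : Type*} [MeasurableSpace Ω] (μ : Measure Ω)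
    [IsProbabilityMeasure μ] (Y : Ω → ℝ) (hY : Measurable Y) (hYnn : ∀ ω, 0 ≤ Y ω)
    (ν c x₁ T : ℝ) (hν1 : ν < 1) (hc : 0 ≤ c) (hx₁ : 1 ≤ x₁) (hT : x₁ ≤ T)
    (htail : ∀ t, x₁ ≤ t → (μ {ω | t ≤ Y ω}).toReal ≤ c * t ^ (-ν)) :
    ∫ ω, min (Y ω) T ∂μ ≤ x₁ + c / (1 - ν) * T ^ (1 - ν) := by
  have hT0 : (0:ℝ) < T := lt_of_lt_of_le (lt_of_lt_of_le one_pos hx₁) hT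
  have hx₁0 : (0:ℝ) < x₁ := lt_of_lt_of_le one_pos hx₁
  set f : Ω → ℝ := fun ω => min (Y ω) T with hf
  have hfmeas : Measurable f := hY.min measurable_const
  have hfnn : ∀ ω, 0 ≤ f ω := fun ω => le_min (hYnn ω) hT0.le
  have hfle : ∀ ω, f ω ≤ T := fun ω => min_le_right _ _
  have hfint : Integrable f μ := by
    refine Integrable.mono' (integrable_const T) hfmeas.aestronglyMeasurable ?_
    filter_upwards with ω
    rw [Real.norm_eq_abs, abs_of_nonneg (hfnn ω)]
    exact hfle ω
  rw [hfint.integral_eq_integral_Ioc_meas_le (Filter.Eventually.of_forall hfnn)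
    (Filter.Eventually.of_forall hfle)]
  set H : ℝ → ℝ := fun t => (μ {ω | t ≤ Y ω}).toReal with hH
  have hHanti : Antitone H := by
    intro s t hst
    exact ENNReal.toReal_mono (measure_ne_top _ _)
      (measure_mono (fun ω hω => le_trans hst hω))
  have hHmeas : Measurable H := hHanti.measurable
  have hHnn : ∀ t, 0 ≤ H t := fun t => ENNReal.toReal_nonneg
  have hHle1 : ∀ t, H t ≤ 1 := by
    intro t
    rw [hH]
    have : μ {ω | t ≤ Y ω} ≤ 1 := prob_le_one
    simpa using ENNReal.toReal_mono (by simp) this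
  have hcongr : ∀ t ∈ Ioc (0:ℝ) T, (μ {a | t ≤ f a}).toReal = H t := by
    intro t ht
    congr 1
    apply congrArg
    ext ω
    simp only [hf, Set.mem_setOf_eq, le_min_iff]
    exact ⟨fun h => h.1, fun h => ⟨h, ht.2⟩⟩
  rw [setIntegral_congr_fun measurableSet_Ioc (f := fun t => μ.real {a | t ≤ f a}) hcongr]
  have hHintOn : ∀ s : Set ℝ, s ⊆ Ioc (0:ℝ) T → IntegrableOn H s := by
    intro s hs
    refine IntegrableOn.mono_set ?_ hs
    refine Integrable.mono' ((integrableOn_const (C:=(1:ℝ)) measure_Ioc_lt_top.ne))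
      hHmeas.aestronglyMeasurable.restrict ?_
    filter_upwards with t
    rw [Real.norm_eq_abs, abs_of_nonneg (hHnn t)]
    exact hHle1 t
  have hsplit : Ioc (0:ℝ) T = Ioc 0 x₁ ∪ Ioc x₁ T := (Ioc_union_Ioc_eq_Ioc hx₁0.le hT).symm
  rw [hsplit, setIntegral_union (Ioc_disjoint_Ioc_of_le le_rfl) measurableSet_Ioc
    (hHintOn _ (by rw [hsplit]; exact subset_union_left))
    (hHintOn _ (by rw [hsplit]; exact subset_union_right))]
  have h1 : ∫ t in Ioc (0:ℝ) x₁, H t ≤ x₁ := by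
    calc ∫ t in Ioc (0:ℝ) x₁, H t ≤ ∫ _t in Ioc (0:ℝ) x₁, (1:ℝ) := by
          apply setIntegral_mono_on (hHintOn _ (by rw [hsplit]; exact subset_union_left))
            ((integrableOn_const (C:=(1:ℝ)) measure_Ioc_lt_top.ne)) measurableSet_Ioc
          intro t _
          exact hHle1 t
      _ = x₁ := by
          simp [Real.volume_Ioc, hx₁0.le]
  have hrpow_int : IntegrableOn (fun t : ℝ => c * t ^ (-ν)) (Ioc x₁ T) := by
    have : IntervalIntegrable (fun t : ℝ => t ^ (-ν)) volume x₁ T :=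
      intervalIntegral.intervalIntegrable_rpow' (by linarith)
    have h2 := (intervalIntegrable_iff_integrableOn_Ioc_of_le hT).mp this
    exact h2.const_mul c
  have h2 : ∫ t in Ioc x₁ T, H t ≤ c / (1 - ν) * T ^ (1 - ν) := by
    calc ∫ t in Ioc x₁ T, H t ≤ ∫ t in Ioc x₁ T, c * t ^ (-ν) := by
          apply setIntegral_mono_on (hHintOn _ (by rw [hsplit]; exact subset_union_right))
            hrpow_int measurableSet_Ioc
          intro t ht
          exact htail t ht.1.le
      _ = c * ∫ t in x₁..T, t ^ (-ν) := by
          rw [← intervalIntegral.integral_const_mul, intervalIntegral.integral_of_le hT]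
      _ = c * ((T ^ (-ν + 1) - x₁ ^ (-ν + 1)) / (-ν + 1)) := by
          rw [integral_rpow (Or.inl (by linarith))]
      _ ≤ c / (1 - ν) * T ^ (1 - ν) := by
          have hx₁p : 0 ≤ x₁ ^ (-ν + 1) := Real.rpow_nonneg hx₁0.le _
          have h1ν : (0:ℝ) < 1 - ν := by linarith
          have : (T ^ (-ν + 1) - x₁ ^ (-ν + 1)) / (-ν + 1) ≤ T ^ (1 - ν) / (1 - ν) := by
            rw [show (-ν + 1) = 1 - ν by ring]
            gcongr
            linarith [Real.rpow_nonneg hx₁0.le (1-ν)]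
          calc c * ((T ^ (-ν + 1) - x₁ ^ (-ν + 1)) / (-ν + 1)) ≤ c * (T ^ (1 - ν) / (1 - ν)) :=
                mul_le_mul_of_nonneg_left this hc
            _ = c / (1 - ν) * T ^ (1 - ν) := by ring
  linarith

lemma toReal_measure_union_le {Ω : Type*} [MeasurableSpace Ω] (μ : Measure Ω)
    [IsFiniteMeasure μ] (A B : Set Ω) :
    (μ (A ∪ B)).toReal ≤ (μ A).toReal + (μ B).toReal := by
  rw [← ENNReal.toReal_add (measure_ne_top μ A) (measure_ne_top μ B)]
  exact ENNReal.toReal_mono (by simp [ENNReal.add_ne_top, measure_ne_top]) (measure_union_le A B)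

/-- Union bound plus Markov's inequality for a sum of nonnegative random variables. -/
lemma sum_tail_bound {Ω : Type*} [MeasurableSpace Ω] (μ : Measure Ω)
    [IsProbabilityMeasure μ] (X : ℕ → Ω → ℝ)
    (hmeas : ∀ i, Measurable (X i)) (hnonneg : ∀ i ω, 0 ≤ X i ω) (s : Finset ℕ) (T g B : ℝ)
    (hT : 0 < T) (hg : ∀ j ∈ s, (μ {ω | T < X j ω}).toReal ≤ g)
    (hmean : ∀ j ∈ s, ∫ ω, min (X j ω) T ∂μ ≤ B) :
    (μ {ω | 2*T < ∑ j ∈ s, X j ω}).toReal ≤ s.card * g + s.card * B / T := by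
  set f : Ω → ℝ := fun ω => ∑ j ∈ s, min (X j ω) T with hf
  have hminint : ∀ j : ℕ, Integrable (fun ω => min (X j ω) T) μ := by
    intro j
    refine Integrable.mono' (integrable_const T)
      ((hmeas j).min measurable_const).aestronglyMeasurable ?_
    filter_upwards with ω
    rw [Real.norm_eq_abs, abs_of_nonneg (le_min (hnonneg j ω) hT.le)]
    exact min_le_right _ _
  have hfint : Integrable f μ := integrable_finset_sum s (fun j _ => hminint j)
  have hfnn : ∀ ω, 0 ≤ f ω :=
    fun ω => Finset.sum_nonneg fun j _ => le_min (hnonneg j ω) hT.le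
  have hincl : {ω | 2*T < ∑ j ∈ s, X j ω} ⊆
      (⋃ j ∈ s, {ω | T < X j ω}) ∪ {ω | T ≤ f ω} := by
    intro ω hω
    by_cases hbig : ∃ j ∈ s, T < X j ω
    · obtain ⟨j, hj, hXj⟩ := hbig
      exact Or.inl (Set.mem_biUnion hj hXj)
    · push_neg at hbig
      refine Or.inr ?_
      have : f ω = ∑ j ∈ s, X j ω := by
        apply Finset.sum_congr rfl
        intro j hj
        exact min_eq_left (hbig j hj)
      rw [Set.mem_setOf_eq, this]
      have := Set.mem_setOf_eq ▸ hω
      linarith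
  have hmarkov : (μ {ω | T ≤ f ω}).toReal ≤ s.card * B / T := by
    have h := mul_meas_ge_le_integral_of_nonneg (μ := μ)
      (Filter.Eventually.of_forall hfnn) hfint T
    have hint : ∫ ω, f ω ∂μ ≤ s.card * B := by
      rw [hf]
      rw [integral_finset_sum s (fun j _ => hminint j)]
      calc ∑ j ∈ s, ∫ ω, min (X j ω) T ∂μ ≤ ∑ _j ∈ s, B :=
            Finset.sum_le_sum hmean
        _ = s.card * B := by simp [mul_comm]
    rw [div_eq_mul_inv]
    calc (μ {ω | T ≤ f ω}).toReal = T * (μ {ω | T ≤ f ω}).toReal * T⁻¹ := by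
          field_simp
      _ ≤ (s.card * B) * T⁻¹ := by
          apply mul_le_mul_of_nonneg_right _ (inv_nonneg.2 hT.le)
          exact h.trans hint
  have hunion : (μ (⋃ j ∈ s, {ω | T < X j ω})).toReal ≤ s.card * g := by
    have h1 : μ (⋃ j ∈ s, {ω | T < X j ω}) ≤ ∑ j ∈ s, μ {ω | T < X j ω} :=
      measure_biUnion_finset_le s _
    calc (μ (⋃ j ∈ s, {ω | T < X j ω})).toReal
        ≤ (∑ j ∈ s, μ {ω | T < X j ω}).toReal :=
          ENNReal.toReal_mono (by
            refine (ENNReal.sum_lt_top.2 (fun j _ => ?_)).ne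
            exact measure_lt_top μ _) h1
      _ = ∑ j ∈ s, (μ {ω | T < X j ω}).toReal :=
          ENNReal.toReal_sum (fun j _ => measure_ne_top μ _)
      _ ≤ ∑ _j ∈ s, g := Finset.sum_le_sum hg
      _ = s.card * g := by simp [mul_comm]
  calc (μ {ω | 2*T < ∑ j ∈ s, X j ω}).toReal
      ≤ (μ ((⋃ j ∈ s, {ω | T < X j ω}) ∪ {ω | T ≤ f ω})).toReal :=
        ENNReal.toReal_mono (measure_ne_top μ _) (measure_mono hincl)
    _ ≤ (μ (⋃ j ∈ s, {ω | T < X j ω})).toReal + (μ {ω | T ≤ f ω}).toReal :=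
        toReal_measure_union_le μ _ _
    _ ≤ s.card * g + s.card * B / T := add_le_add hunion hmarkov

end AuxLemmas

set_option maxHeartbeats 1000000 in
theorem pareto_tail_sinr_positive {Ω : Type*} [MeasurableSpace Ω] (μpr : Measure Ω)
    [IsProbabilityMeasure μpr] (X : ℕ → Ω → ℝ)
    (hmeas : ∀ i, Measurable (X i))
    (hindep : iIndepFun X μpr)
    (hident : ∀ i j, IdentDistrib (X i) (X j) μpr μpr)
    (hnonneg : ∀ i ω, 0 ≤ X i ω)
    (ν c₀ : ℝ) (hν : 0 < ν) (hν1 : ν < 1) (hc₀ : 0 < c₀)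
    (F : ℝ → ℝ) (hF : ∀ x, F x = (μpr {ω | X 0 ω ≤ x}).toReal)
    (htail : Tendsto (fun x : ℝ => (1 - F x) / (c₀ * x ^ (-ν) / Real.Gamma (1 - ν)))
      atTop (nhds 1))
    (I M : ℕ → Ω → ℝ)
    (hI : ∀ n ω, I n ω = ∑ i ∈ Finset.range n, X i ω)
    (hM : ∀ n ω, M n ω = ⨆ i : Fin n, X i ω)
    (hEratio : Tendsto (fun n : ℕ => ∫ ω, M n ω / I n ω ∂μpr) atTop (nhds (1 - ν)))
    (hnondegen : ¬ ∃ c : ℝ, ∀ ε > (0 : ℝ),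
      Tendsto (fun n : ℕ => (μpr {ω | ε < |I n ω / M n ω - c|}).toReal) atTop (nhds 0)) :
    0 < Filter.liminf (fun n : ℕ => (μpr {ω | 1 - ν ≤ M n ω / I n ω}).toReal) atTop := by
  classical
  have hΓ : 0 < Real.Gamma (1 - ν) := Real.Gamma_pos_of_pos (by linarith)
  set a : ℝ := c₀ / Real.Gamma (1 - ν) with ha_def
  have ha : 0 < a := div_pos hc₀ hΓ
  -- tail function of X 0 in terms of the given cdf F
  have hFG : ∀ x, 1 - F x = (μpr {ω | x < X 0 ω}).toReal := by
    intro x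
    have hms : MeasurableSet {ω | X 0 ω ≤ x} := (hmeas 0) measurableSet_Iic
    have hcompl : {ω | X 0 ω ≤ x}ᶜ = {ω | x < X 0 ω} := by
      ext ω; simp [not_le]
    have h1 : μpr {ω | X 0 ω ≤ x} + μpr {ω | x < X 0 ω} = 1 := by
      rw [← hcompl]
      simpa using measure_add_measure_compl (μ := μpr) hms
    have h2 := congrArg ENNReal.toReal h1
    rw [ENNReal.toReal_add (measure_ne_top _ _) (measure_ne_top _ _), ENNReal.toReal_one] at h2
    rw [hF]
    linarith
  have htail' : Tendsto (fun x : ℝ => (μpr {ω | x < X 0 ω}).toReal / (a * x ^ (-ν)))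
      atTop (nhds 1) := by
    have heq : (fun x : ℝ => (1 - F x) / (c₀ * x ^ (-ν) / Real.Gamma (1 - ν))) =
        fun x : ℝ => (μpr {ω | x < X 0 ω}).toReal / (a * x ^ (-ν)) := by
      funext x
      rw [hFG x, ha_def]
      ring_nf
    rwa [heq] at htail
  -- band around the tail for large x
  obtain ⟨x₀', hx₀'⟩ := eventually_atTop.mp
    ((htail'.eventually (eventually_gt_nhds (by norm_num : (1:ℝ)/2 < 1))).and
      (htail'.eventually (eventually_lt_nhds (by norm_num : (1:ℝ) < 2))))
  set x₀ : ℝ := max x₀' 1 with hx₀_def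
  have hx₀1 : (1:ℝ) ≤ x₀ := le_max_right _ _
  have hGlow : ∀ x, x₀ ≤ x → a/2 * x ^ (-ν) ≤ (μpr {ω | x < X 0 ω}).toReal := by
    intro x hx
    have hx0 : (0:ℝ) < x := lt_of_lt_of_le one_pos (hx₀1.trans hx)
    have hd : 0 < a * x ^ (-ν) := mul_pos ha (Real.rpow_pos_of_pos hx0 _)
    have hb := (hx₀' x ((le_max_left _ _).trans hx)).1
    have := (lt_div_iff₀ hd).mp hb
    calc a/2 * x ^ (-ν) = 1/2 * (a * x ^ (-ν)) := by ring
      _ ≤ (μpr {ω | x < X 0 ω}).toReal := by linarith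
  have hGhigh : ∀ x, x₀ ≤ x → (μpr {ω | x < X 0 ω}).toReal ≤ 2 * a * x ^ (-ν) := by
    intro x hx
    have hx0 : (0:ℝ) < x := lt_of_lt_of_le one_pos (hx₀1.trans hx)
    have hd : 0 < a * x ^ (-ν) := mul_pos ha (Real.rpow_pos_of_pos hx0 _)
    have hb := (hx₀' x ((le_max_left _ _).trans hx)).2
    have := (div_lt_iff₀ hd).mp hb
    calc (μpr {ω | x < X 0 ω}).toReal ≤ 2 * (a * x ^ (-ν)) := by linarith
      _ = 2 * a * x ^ (-ν) := by ring
  -- Ici-tail bound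
  set x₁ : ℝ := 2 * x₀ with hx₁_def
  have hx₁1 : (1:ℝ) ≤ x₁ := by rw [hx₁_def]; linarith
  have hHbound : ∀ t, x₁ ≤ t → (μpr {ω | t ≤ X 0 ω}).toReal ≤ 4 * a * t ^ (-ν) := by
    intro t ht
    have ht0 : (0:ℝ) < t := lt_of_lt_of_le one_pos (hx₁1.trans ht)
    have hsub : {ω | t ≤ X 0 ω} ⊆ {ω | t/2 < X 0 ω} := by
      intro ω hω
      simp only [Set.mem_setOf_eq] at *
      linarith
    have h1 : (μpr {ω | t ≤ X 0 ω}).toReal ≤ (μpr {ω | t/2 < X 0 ω}).toReal :=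
      ENNReal.toReal_mono (measure_ne_top _ _) (measure_mono hsub)
    have h2 : (μpr {ω | t/2 < X 0 ω}).toReal ≤ 2 * a * (t/2) ^ (-ν) := by
      apply hGhigh
      rw [hx₁_def] at ht; linarith
    have h3 : (t/2 : ℝ) ^ (-ν) ≤ 2 * t ^ (-ν) := by
      have he : (t/2 : ℝ) ^ (-ν) = t ^ (-ν) * 2 ^ ν := by
        rw [div_eq_mul_inv, Real.mul_rpow ht0.le (by norm_num),
          ← Real.rpow_neg_one (2:ℝ), ← Real.rpow_mul (by norm_num)]
        norm_num
      rw [he]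
      have h2ν : (2:ℝ) ^ ν ≤ 2 := by
        calc (2:ℝ) ^ ν ≤ (2:ℝ) ^ (1:ℝ) :=
              Real.rpow_le_rpow_of_exponent_le one_le_two hν1.le
          _ = 2 := Real.rpow_one 2
      have := Real.rpow_nonneg ht0.le (-ν)
      nlinarith
    calc (μpr {ω | t ≤ X 0 ω}).toReal ≤ 2 * a * (t/2) ^ (-ν) := h1.trans h2
      _ ≤ 2 * a * (2 * t ^ (-ν)) := by nlinarith
      _ = 4 * a * t ^ (-ν) := by ring
  -- constants
  set q : ℝ := 32 * a / (1 - ν) with hq_def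
  have hq0 : 0 < q := div_pos (by linarith) (by linarith)
  set k : ℝ := 16 * a + q + 1 with hk_def
  have hk1 : (1:ℝ) ≤ k := by rw [hk_def]; linarith
  have hk0 : (0:ℝ) < k := by linarith
  set K : ℝ := k ^ (1/ν) with hK_def
  have hK1 : (1:ℝ) ≤ K := Real.one_le_rpow hk1 (by positivity)
  have hK0 : (0:ℝ) < K := lt_of_lt_of_le one_pos hK1
  have hpow_collapse : ∀ x : ℝ, 0 < x → (x ^ (1/ν)) ^ (-ν) = x⁻¹ := by
    intro x hx
    rw [← Real.rpow_mul hx.le]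
    have : 1/ν * (-ν) = -1 := by field_simp
    rw [this, Real.rpow_neg_one]
  have hKν : K ^ (-ν) = k⁻¹ := hpow_collapse k hk0
  -- the positive constant δ
  have hcpos : (0:ℝ) < (2*K/ν) ^ (-ν) := Real.rpow_pos_of_pos (by positivity) _
  set δ : ℝ := a/4 * ((2*K/ν) ^ (-ν)) with hδ_def
  have hδpos : 0 < δ := by rw [hδ_def]; positivity
  -- transfer of tails to each coordinate
  have htr : ∀ (j : ℕ) (t : ℝ), μpr {ω | t < X j ω} = μpr {ω | t < X 0 ω} := by
    intro j t
    have h := (hident j 0).measure_mem_eq (measurableSet_Ioi (a := t))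
    simpa [Set.preimage, Set.mem_Ioi] using h
  have htrIci : ∀ (j : ℕ) (t : ℝ), μpr {ω | t ≤ X j ω} = μpr {ω | t ≤ X 0 ω} := by
    intro j t
    have h := (hident j 0).measure_mem_eq (measurableSet_Ici (a := t))
    simpa [Set.preimage, Set.mem_Ici] using h
  -- eventual conditions on n
  have hev1 : ∀ᶠ n : ℕ in atTop, x₁ ≤ (n:ℝ) ^ (1/ν) :=
    ((tendsto_rpow_atTop (by positivity)).comp
      tendsto_natCast_atTop_atTop).eventually_ge_atTop x₁
  have hev2 : ∀ᶠ n : ℕ in atTop, x₁ * (n:ℝ) ^ (1 - 1/ν) ≤ 1/4 := by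
    have h0 : Tendsto (fun n : ℕ => x₁ * (n:ℝ) ^ (1 - 1/ν)) atTop (nhds (x₁ * 0)) := by
      apply Tendsto.const_mul
      have : (1 - 1/ν) = -(1/ν - 1) := by ring
      rw [this]
      have hpos : 0 < 1/ν - 1 := by
        have : 1 < 1/ν := by
          rw [lt_div_iff₀ hν]; linarith
        linarith
      exact (tendsto_rpow_neg_atTop hpos).comp tendsto_natCast_atTop_atTop
    rw [mul_zero] at h0
    exact (h0.eventually (eventually_le_nhds (by norm_num : (0:ℝ) < 1/4)))
  have hev3 : ∀ᶠ n : ℕ in atTop, 1 ≤ n := eventually_ge_atTop 1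
  -- the main eventual lower bound
  have hmain : ∀ᶠ n : ℕ in atTop, δ ≤ (μpr {ω | 1 - ν ≤ M n ω / I n ω}).toReal := by
    filter_upwards [hev1, hev2, hev3] with n h1 h2 h3
    have hn0 : (0:ℝ) < n := by exact_mod_cast h3
    have hnpow0 : (0:ℝ) < (n:ℝ) ^ (1/ν) := Real.rpow_pos_of_pos hn0 _
    set Tn : ℝ := K * (n:ℝ) ^ (1/ν) with hTn_def
    have hTnx₁ : x₁ ≤ Tn :=
      h1.trans (le_mul_of_one_le_left hnpow0.le hK1)
    have hTn0 : (0:ℝ) < Tn := lt_of_lt_of_le (by linarith) hTnx₁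
    have hTnx₀ : x₀ ≤ Tn := by rw [hx₁_def] at hTnx₁; linarith
    have hTnpow : Tn ^ (-ν) = k⁻¹ * (n:ℝ)⁻¹ := by
      rw [hTn_def, Real.mul_rpow hK0.le hnpow0.le, hKν, hpow_collapse _ hn0]
    have hkey : (n:ℝ) * Tn ^ (-ν) = k⁻¹ := by
      rw [hTnpow]
      field_simp
    -- per-coordinate bounds
    set B : ℝ := x₁ + (4*a) / (1-ν) * Tn ^ (1-ν) with hB_def
    have hB0 : 0 ≤ B := by
      rw [hB_def]
      have h4 : 0 ≤ (4*a) / (1-ν) * Tn ^ (1-ν) := by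
        apply mul_nonneg (le_of_lt (div_pos (by linarith) (by linarith)))
        exact Real.rpow_nonneg hTn0.le _
      linarith
    have hmean : ∀ j, ∫ ω, min (X j ω) Tn ∂μpr ≤ B := by
      intro j
      apply trunc_mean_bound μpr (X j) (hmeas j) (fun ω => hnonneg j ω) ν (4*a) x₁ Tn
        hν1 (by positivity) hx₁1 hTnx₁
      intro t ht
      rw [htrIci j t]
      exact hHbound t ht
    have hgbound : ∀ j, (μpr {ω | Tn < X j ω}).toReal ≤ 2 * a * Tn ^ (-ν) := by
      intro j
      rw [htr j Tn]
      exact hGhigh Tn hTnx₀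
    -- the "rest is small" bound
    have hbad : ∀ i : ℕ,
        (μpr {ω | 2*Tn < ∑ j ∈ (Finset.range n).erase i, X j ω}).toReal ≤ 1/2 := by
      intro i
      have hcard : ((((Finset.range n).erase i).card : ℕ) : ℝ) ≤ (n:ℝ) := by
        have : ((Finset.range n).erase i).card ≤ n := by
          calc ((Finset.range n).erase i).card ≤ (Finset.range n).card := Finset.card_erase_le
            _ = n := Finset.card_range n
        exact_mod_cast this
      have happ := sum_tail_bound μpr X hmeas hnonneg ((Finset.range n).erase i) Tn
        (2*a*Tn^(-ν)) B hTn0 (fun j _ => hgbound j) (fun j _ => hmean j)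
      have hg0 : (0:ℝ) ≤ 2*a*Tn^(-ν) := by positivity
      have step1 : (((Finset.range n).erase i).card : ℝ) * (2*a*Tn^(-ν))
          + (((Finset.range n).erase i).card : ℝ) * B / Tn
          ≤ (n:ℝ) * (2*a*Tn^(-ν)) + (n:ℝ) * B / Tn := by
        gcongr
      have t1 : (n:ℝ) * (2*a*Tn^(-ν)) = 2*a*k⁻¹ := by
        rw [show (n:ℝ)*(2*a*Tn^(-ν)) = 2*a*((n:ℝ)*Tn^(-ν)) by ring, hkey]
      have hTT : Tn ^ (1-ν) = Tn * Tn ^ (-ν) := by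
        rw [show (1-ν) = 1 + (-ν) by ring, Real.rpow_add hTn0, Real.rpow_one]
      have t2 : (n:ℝ) * B / Tn = x₁ * ((n:ℝ)/Tn) + (4*a/(1-ν)) * ((n:ℝ) * Tn^(-ν)) := by
        rw [hB_def, hTT]
        field_simp
      have t3 : x₁ * ((n:ℝ)/Tn) ≤ 1/4 := by
        have hdn : (n:ℝ)/Tn ≤ (n:ℝ) ^ (1 - 1/ν) := by
          have he : (n:ℝ) ^ (1 - 1/ν) = (n:ℝ)/(n:ℝ)^(1/ν) := by
            rw [Real.rpow_sub hn0, Real.rpow_one]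
          rw [he, hTn_def]
          exact div_le_div_of_nonneg_left hn0.le hnpow0
            (le_mul_of_one_le_left hnpow0.le hK1)
        calc x₁ * ((n:ℝ)/Tn) ≤ x₁ * (n:ℝ) ^ (1 - 1/ν) :=
              mul_le_mul_of_nonneg_left hdn (by linarith)
          _ ≤ 1/4 := h2
      have t4 : 2*a*k⁻¹ ≤ 1/8 := by
        rw [← div_eq_mul_inv, div_le_div_iff₀ hk0 (by norm_num)]
        rw [hk_def]
        linarith
      have t5 : (4*a/(1-ν)) * ((n:ℝ) * Tn^(-ν)) ≤ 1/8 := by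
        rw [hkey, ← div_eq_mul_inv, div_le_div_iff₀ hk0 (by norm_num)]
        have hq8 : 8 * (4*a/(1-ν)) = q := by rw [hq_def]; ring
        rw [hk_def]
        linarith [hq8, hq0]
      calc (μpr {ω | 2*Tn < ∑ j ∈ (Finset.range n).erase i, X j ω}).toReal
          ≤ (((Finset.range n).erase i).card : ℝ) * (2*a*Tn^(-ν))
            + (((Finset.range n).erase i).card : ℝ) * B / Tn := happ
        _ ≤ (n:ℝ) * (2*a*Tn^(-ν)) + (n:ℝ) * B / Tn := step1
        _ = 2*a*k⁻¹ + (x₁ * ((n:ℝ)/Tn) + (4*a/(1-ν)) * ((n:ℝ) * Tn^(-ν))) := by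
            rw [t1, t2]
        _ ≤ 1/8 + (1/4 + 1/8) := by linarith
        _ = 1/2 := by norm_num
    -- the complement bound
    have hSmeas : ∀ i : ℕ, Measurable (fun ω => ∑ j ∈ (Finset.range n).erase i, X j ω) :=
      fun i => Finset.measurable_sum _ (fun j _ => hmeas j)
    have hqlow : ∀ i : ℕ,
        1/2 ≤ (μpr {ω | ∑ j ∈ (Finset.range n).erase i, X j ω ≤ 2*Tn}).toReal := by
      intro i
      have hms : MeasurableSet {ω | ∑ j ∈ (Finset.range n).erase i, X j ω ≤ 2*Tn} :=
        (hSmeas i) measurableSet_Iic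
      have hcompl : {ω | ∑ j ∈ (Finset.range n).erase i, X j ω ≤ 2*Tn}ᶜ
          = {ω | 2*Tn < ∑ j ∈ (Finset.range n).erase i, X j ω} := by
        ext ω; simp [not_le]
      have hadd : μpr {ω | ∑ j ∈ (Finset.range n).erase i, X j ω ≤ 2*Tn}
          + μpr {ω | 2*Tn < ∑ j ∈ (Finset.range n).erase i, X j ω} = 1 := by
        rw [← hcompl]
        simpa using measure_add_measure_compl (μ := μpr) hms
      have h2' := congrArg ENNReal.toReal hadd
      rw [ENNReal.toReal_add (measure_ne_top _ _) (measure_ne_top _ _),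
        ENNReal.toReal_one] at h2'
      linarith [hbad i]
    -- the events
    set A : ℕ → Set Ω := fun i =>
      {ω | 2*Tn/ν < X i ω} ∩ {ω | ∑ j ∈ (Finset.range n).erase i, X j ω ≤ 2*Tn} with hA_def
    have hAmeas : ∀ i, MeasurableSet (A i) := fun i =>
      ((hmeas i) measurableSet_Ioi).inter ((hSmeas i) measurableSet_Iic)
    have hβ : 2*Tn < 2*Tn/ν := by
      rw [lt_div_iff₀ hν]
      have h2Tn : (0:ℝ) < 2*Tn := by linarith
      calc 2*Tn*ν < 2*Tn*1 := by
            exact mul_lt_mul_of_pos_left hν1 h2Tn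
        _ = 2*Tn := by ring
    have hdisj : (↑(Finset.range n) : Set ℕ).PairwiseDisjoint A := by
      intro i hi j hj hij
      rw [Function.onFun]
      rw [Set.disjoint_left]
      intro ω hωi hωj
      have hjr : j ∈ Finset.range n := Finset.mem_coe.mp hj
      have hje : j ∈ (Finset.range n).erase i := Finset.mem_erase.mpr ⟨hij.symm, hjr⟩
      have hle : X j ω ≤ ∑ l ∈ (Finset.range n).erase i, X l ω :=
        Finset.single_le_sum (fun l _ => hnonneg l ω) hje
      have h1' : X j ω ≤ 2*Tn := hle.trans hωi.2
      have h2' : 2*Tn/ν < X j ω := hωj.1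
      linarith
    -- independence: product formula
    have hAprod : ∀ i, μpr (A i) =
        μpr {ω | 2*Tn/ν < X i ω}
          * μpr {ω | ∑ j ∈ (Finset.range n).erase i, X j ω ≤ 2*Tn} := by
      intro i
      have hIF : IndepFun (X i) (∑ j ∈ (Finset.range n).erase i, X j) μpr :=
        (hindep.indepFun_finsetSum_of_notMem hmeas
          (Finset.notMem_erase i (Finset.range n))).symm
      have h := hIF.measure_inter_preimage_eq_mul (Set.Ioi (2*Tn/ν)) (Set.Iic (2*Tn))
        measurableSet_Ioi measurableSet_Iic
      have hs1 : X i ⁻¹' Set.Ioi (2*Tn/ν) = {ω | 2*Tn/ν < X i ω} := rfl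
      have hs2 : (∑ j ∈ (Finset.range n).erase i, X j) ⁻¹' Set.Iic (2*Tn)
          = {ω | ∑ j ∈ (Finset.range n).erase i, X j ω ≤ 2*Tn} := by
        ext ω
        simp [Set.mem_preimage, Set.mem_Iic, Finset.sum_apply]
      rw [hs1, hs2] at h
      rw [hA_def]
      exact h
    -- tail lower bound for the big coordinate
    have hXlow : ∀ i : ℕ, (a/2) * ((2*K/ν)^(-ν)) * (n:ℝ)⁻¹
        ≤ (μpr {ω | 2*Tn/ν < X i ω}).toReal := by
      intro i
      rw [htr i]
      have harg : x₀ ≤ 2*Tn/ν := by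
        have : Tn ≤ 2*Tn := by linarith
        linarith [hβ, hTnx₀]
      have hlow := hGlow _ harg
      have hcoll : (2*Tn/ν)^(-ν) = ((2*K/ν)^(-ν)) * (n:ℝ)⁻¹ := by
        have he : 2*Tn/ν = (2*K/ν) * (n:ℝ)^(1/ν) := by
          rw [hTn_def]; ring
        rw [he, Real.mul_rpow (by positivity) hnpow0.le, hpow_collapse _ hn0]
      rw [hcoll] at hlow
      calc (a/2) * ((2*K/ν)^(-ν)) * (n:ℝ)⁻¹
          = a/2 * (((2*K/ν)^(-ν)) * (n:ℝ)⁻¹) := by ring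
        _ ≤ (μpr {ω | 2*Tn/ν < X 0 ω}).toReal := hlow
    -- the events force a large ratio
    have hsub : (⋃ i ∈ Finset.range n, A i) ⊆ {ω | 1 - ν ≤ M n ω / I n ω} := by
      intro ω hω
      rw [Set.mem_iUnion₂] at hω
      obtain ⟨i, hi, hωi⟩ := hω
      obtain ⟨hXi, hS⟩ := hωi
      have hiₙ : i < n := Finset.mem_range.mp hi
      have hIval : I n ω = X i ω + ∑ j ∈ (Finset.range n).erase i, X j ω := by
        rw [hI]
        exact (Finset.add_sum_erase _ _ hi).symm
      have hS0 : 0 ≤ ∑ j ∈ (Finset.range n).erase i, X j ω :=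
        Finset.sum_nonneg (fun j _ => hnonneg j ω)
      have hXipos : 0 < X i ω := by
        have : (0:ℝ) < 2*Tn/ν := by positivity
        exact lt_trans this hXi
      have hIpos : 0 < I n ω := by rw [hIval]; linarith
      have hMge : X i ω ≤ M n ω := by
        rw [hM]
        exact le_ciSup (Set.Finite.bddAbove (Set.finite_range (fun j : Fin n => X (↑j) ω)))
          (⟨i, hiₙ⟩ : Fin n)
      have hS' : ∑ j ∈ (Finset.range n).erase i, X j ω ≤ 2*Tn := hS
      have hXi' : 2*Tn/ν < X i ω := hXi
      rw [Set.mem_setOf_eq, le_div_iff₀ hIpos, hIval]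
      have hνXi : 2*Tn < X i ω * ν := (div_lt_iff₀ hν).mp hXi'
      nlinarith [mul_nonneg hν.le hS0, hS', hνXi, hMge]
    -- put everything together
    have hchain : δ ≤ (μpr (⋃ i ∈ Finset.range n, A i)).toReal := by
      have hstep : δ = (n:ℝ) * ((a/2) * ((2*K/ν)^(-ν)) * (n:ℝ)⁻¹ * (1/2)) := by
        rw [hδ_def]
        field_simp
        ring
      rw [hstep]
      calc (n:ℝ) * ((a/2) * ((2*K/ν)^(-ν)) * (n:ℝ)⁻¹ * (1/2))
          = ∑ _i ∈ Finset.range n, ((a/2) * ((2*K/ν)^(-ν)) * (n:ℝ)⁻¹ * (1/2)) := by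
            rw [Finset.sum_const, Finset.card_range]
            simp [mul_comm]
        _ ≤ ∑ i ∈ Finset.range n, (μpr (A i)).toReal := by
            apply Finset.sum_le_sum
            intro i _
            rw [hAprod i, ENNReal.toReal_mul]
            exact mul_le_mul (hXlow i) (hqlow i) (by norm_num) ENNReal.toReal_nonneg
        _ = (μpr (⋃ i ∈ Finset.range n, A i)).toReal := by
            rw [measure_biUnion_finset hdisj (fun i _ => hAmeas i),
              ENNReal.toReal_sum (fun i _ => measure_ne_top _ _)]
    calc δ ≤ (μpr (⋃ i ∈ Finset.range n, A i)).toReal := hchain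
      _ ≤ (μpr {ω | 1 - ν ≤ M n ω / I n ω}).toReal :=
          ENNReal.toReal_mono (measure_ne_top _ _) (measure_mono hsub)
  -- conclude via liminf
  have hbdd : IsBoundedUnder (· ≤ ·) atTop
      (fun n : ℕ => (μpr {ω | 1 - ν ≤ M n ω / I n ω}).toReal) := by
    refine ⟨1, ?_⟩
    rw [eventually_map]
    filter_upwards with n
    have : μpr {ω | 1 - ν ≤ M n ω / I n ω} ≤ 1 := prob_le_one
    simpa using ENNReal.toReal_mono (by simp) this
  exact lt_of_lt_of_le hδpos (le_liminf_of_le hbdd.isCoboundedUnder_ge hmain)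
end
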